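/- Every K-derivation d of the Lie algebra L = E_∞ can be written as d = ad(z) + d' where z ∈ L and d' is a K-derivation of L satisfying d'((1, 0, 0, 0)) ∈ Z(L). -/

import Mathlib

/- Purely even case of the paper's super setting: K a commutative unital ring
containing 1/2, A a commutative unital associative K-algebra, M an A-module
(hence also a K-module), q : M × M → A a symmetric A-bilinear form. -/

variable {K A M : Type*} [CommRing K] [Invertible (2 : K)] [CommRing A] [Algebra K A]
  [AddCommGroup M] [Module A M] [Module K M] [IsScalarTower K A M]
  [SMulCommClass A K M] [SMulCommClass K A M]

variable (K) in
/-- `a·id_M`, viewed as a `K`-linear endomorphism of `M`. -/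
def aId (a : A) : Module.End K M := a • (1 : Module.End K M)

variable (K) in
/-- `E_{m,n}(p) = q(n,p)·m − q(m,p)·n`, viewed as a `K`-linear endomorphism of `M`. -/
noncomputable def EmapK (q : M →ₗ[A] M →ₗ[A] A) (m n : M) : Module.End K M :=
  ((q n).restrictScalars K).smulRight m - ((q m).restrictScalars K).smulRight n

variable (K) in
/-- `osp(q)`, realized inside `End_K(M)`: the set of `A`-linear endomorphisms `x`
of `M` with `q(x(m),n) + q(x(n),m) = 0` for all `m, n`. -/
def ospK (q : M →ₗ[A] M →ₗ[A] A) : Set (Module.End K M) :=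
  {x | (∀ (a : A) (p : M), x (a • p) = a • x p) ∧
       ∀ m n : M, q (x m) n + q (x n) m = 0}

variable (K) in
/-- `eosp(q)`: the additive subgroup generated by the `E_{m,n}`. -/
noncomputable def eospK (q : M →ₗ[A] M →ₗ[A] A) : AddSubgroup (Module.End K M) :=
  AddSubgroup.closure {f | ∃ m n : M, f = EmapK K q m n}

variable (K) in
/-- The bracket on `E_∞ = A × M × M × E`, where `E` is a Lie subalgebra of
`osp(q)` containing `eosp(q)` (given as a `K`-submodule of `End_K(M)` closed
under commutators and containing all `E_{m,n}`):
`[(a,m,n,x),(a',m',n',x')] = (q(m,n') − q(n,m'),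
  a·m' + x(m') − a'·m − x'(m), −a·n' + x(n') + a'·n − x'(n),
  E_{m,n'} + E_{n,m'} + [x,x'])`. -/
noncomputable def brEinf (q : M →ₗ[A] M →ₗ[A] A) (E : Submodule K (Module.End K M))
    (hEe : ∀ m n : M, EmapK K q m n ∈ E)
    (hbr : ∀ x ∈ E, ∀ y ∈ E, x * y - y * x ∈ E)
    (u v : A × M × M × E) : A × M × M × E :=
  (q u.2.1 v.2.2.1 - q u.2.2.1 v.2.1,
   u.1 • v.2.1 + (u.2.2.2 : Module.End K M) v.2.1 - v.1 • u.2.1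
     - (v.2.2.2 : Module.End K M) u.2.1,
   -(u.1 • v.2.2.1) + (u.2.2.2 : Module.End K M) v.2.2.1 + v.1 • u.2.2.1
     - (v.2.2.2 : Module.End K M) u.2.2.1,
   ⟨EmapK K q u.2.1 v.2.2.1 + EmapK K q u.2.2.1 v.2.1 +
      ((u.2.2.2 : Module.End K M) * (v.2.2.2 : Module.End K M)
        - (v.2.2.2 : Module.End K M) * (u.2.2.2 : Module.End K M)),
    add_mem (add_mem (hEe _ _) (hEe _ _)) (hbr _ u.2.2.2.2 _ v.2.2.2.2)⟩)

theorem EmapK_apply (q : M →ₗ[A] M →ₗ[A] A) (m n p : M) :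
    EmapK K q m n p = q n p • m - q m p • n := rfl

private lemma quad_ext {E : Submodule K (Module.End K M)} {u v : A × M × M × E}
    (h1 : u.1 = v.1) (h2 : u.2.1 = v.2.1) (h3 : u.2.2.1 = v.2.2.1)
    (h4 : (u.2.2.2 : Module.End K M) = v.2.2.2) : u = v := by
  exact Prod.ext h1 (Prod.ext h2 (Prod.ext h3 (Subtype.ext h4)))

private lemma jacZ (q : M →ₗ[A] M →ₗ[A] A) (hq : ∀ m n : M, q m n = q n m)
    (E : Submodule K (Module.End K M))
    (hEe : ∀ m n : M, EmapK K q m n ∈ E)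
    (hEo : (E : Set (Module.End K M)) ⊆ ospK K q)
    (hbr : ∀ x ∈ E, ∀ y ∈ E, x * y - y * x ∈ E)
    (m n : M) (u v : A × M × M × E) :
    brEinf K q E hEe hbr (0, m, n, 0) (brEinf K q E hEe hbr u v) =
      brEinf K q E hEe hbr (brEinf K q E hEe hbr (0, m, n, 0) u) v
      + brEinf K q E hEe hbr u (brEinf K q E hEe hbr (0, m, n, 0) v) := by
  obtain ⟨a₁, m₁, n₁, x₁⟩ := u
  obtain ⟨a₂, m₂, n₂, x₂⟩ := v
  have hx : ∀ (x : E) (a b : M), q ((x : Module.End K M) a) b = - q a ((x : Module.End K M) b) := by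
    intro x a b
    have h := (hEo x.2).2 a b
    have h2 := hq ((x : Module.End K M) b) a
    linear_combination h - h2
  have ha : ∀ (x : E) (a : A) (p : M), (x : Module.End K M) (a • p) = a • (x : Module.End K M) p :=
    fun x a p => (hEo x.2).1 a p
  refine quad_ext ?_ ?_ ?_ ?_
  · simp only [brEinf, map_add, map_sub, map_smul, LinearMap.add_apply, LinearMap.sub_apply,
      LinearMap.smul_apply, smul_eq_mul, hx, ha, LinearMap.map_neg, map_neg, Prod.fst_add,
      ZeroMemClass.coe_zero, LinearMap.zero_apply, map_zero, zero_smul, Module.End.mul_apply,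
      EmapK_apply, neg_neg, mul_neg, neg_mul, neg_zero, zero_mul, mul_zero, sub_self, LinearMap.neg_apply, zero_add, add_zero, sub_zero, zero_sub]
    ring_nf
    linear_combination a₂ * hq m n₁ + a₂ * hq n m₁ - hq m ((x₂ : Module.End K M) n₁)
      - hx x₂ n₁ m + hq n ((x₂ : Module.End K M) m₁) + hx x₂ m₁ n
  · simp only [brEinf, map_add, map_sub, map_smul, LinearMap.add_apply, LinearMap.sub_apply,
      LinearMap.smul_apply, smul_eq_mul, hx, ha, LinearMap.map_neg, map_neg, Prod.fst_add,
      ZeroMemClass.coe_zero, LinearMap.zero_apply, map_zero, zero_smul, Module.End.mul_apply,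
      EmapK_apply, neg_neg, mul_neg, neg_mul, neg_zero, LinearMap.neg_apply, Prod.snd_add, zero_mul, mul_zero, sub_self,
      smul_add, smul_sub, smul_neg, smul_zero, zero_add, add_zero, zero_sub, sub_zero,
      Submodule.coe_add, Submodule.coe_smul, LinearMap.zero_apply]
    match_scalars <;> try ring1
    · linear_combination hq n₂ m₁
    · linear_combination hq m n₂
    · linear_combination hq m₁ m
    · linear_combination -hq m₂ m
    · linear_combination hq n₁ m
    · linear_combination hq m₂ m₁
  · simp only [brEinf, map_add, map_sub, map_smul, LinearMap.add_apply, LinearMap.sub_apply,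
      LinearMap.smul_apply, smul_eq_mul, hx, ha, LinearMap.map_neg, map_neg, Prod.fst_add,
      ZeroMemClass.coe_zero, LinearMap.zero_apply, map_zero, zero_smul, Module.End.mul_apply,
      EmapK_apply, neg_neg, mul_neg, neg_mul, neg_zero, LinearMap.neg_apply, Prod.snd_add, zero_mul, mul_zero, sub_self,
      smul_add, smul_sub, smul_neg, smul_zero, zero_add, add_zero, zero_sub, sub_zero,
      Submodule.coe_add, Submodule.coe_smul, LinearMap.zero_apply]
    match_scalars <;> try ring1
    · linear_combination hq m₂ n₁
    · linear_combination -hq n₂ n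
    · linear_combination hq m₁ n
    · linear_combination -hq m₂ n
    · linear_combination hq n₁ n
    · linear_combination hq n₂ n₁
  · apply LinearMap.ext; intro p
    simp only [brEinf, map_add, map_sub, map_smul, LinearMap.add_apply, LinearMap.sub_apply,
      LinearMap.smul_apply, smul_eq_mul, hx, ha, LinearMap.map_neg, map_neg, Prod.fst_add,
      ZeroMemClass.coe_zero, LinearMap.zero_apply, map_zero, zero_smul, Module.End.mul_apply,
      EmapK_apply, neg_neg, mul_neg, neg_mul, neg_zero, LinearMap.neg_apply, Prod.snd_add, zero_mul, mul_zero, sub_self,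
      smul_add, smul_sub, smul_neg, smul_zero, zero_add, add_zero, zero_sub, sub_zero,
      Submodule.coe_add, Submodule.coe_smul, LinearMap.zero_apply]
    match_scalars <;> try ring1


private lemma EmapK_zero_left (q : M →ₗ[A] M →ₗ[A] A) (n : M) : EmapK K q (0:M) n = 0 := by
  apply LinearMap.ext; intro p
  simp [EmapK_apply]

private lemma br_sub_left (q : M →ₗ[A] M →ₗ[A] A)
    (E : Submodule K (Module.End K M))
    (hEe : ∀ m n : M, EmapK K q m n ∈ E)
    (hbr : ∀ x ∈ E, ∀ y ∈ E, x * y - y * x ∈ E)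
    (u w v : A × M × M × E) :
    brEinf K q E hEe hbr (u - w) v = brEinf K q E hEe hbr u v - brEinf K q E hEe hbr w v := by
  refine quad_ext ?_ ?_ ?_ (LinearMap.ext fun p => ?_)
  all_goals simp only [brEinf, Prod.fst_sub, Prod.snd_sub, Prod.fst_add, Prod.snd_add,
    Prod.smul_fst, Prod.smul_snd, SetLike.val_smul, AddSubgroupClass.coe_sub,
    Submodule.coe_add, map_sub, map_add, LinearMap.map_smul_of_tower,
    LinearMap.sub_apply, LinearMap.add_apply, LinearMap.smul_apply, Module.End.mul_apply,
    LinearMap.smulRight_apply, LinearMap.coe_restrictScalars, EmapK,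
    LinearMap.map_sub, LinearMap.map_add, LinearMap.map_smul, map_smul,
    smul_sub, smul_add, sub_smul, add_smul, smul_assoc]
  all_goals module

private lemma br_sub_right (q : M →ₗ[A] M →ₗ[A] A)
    (E : Submodule K (Module.End K M))
    (hEe : ∀ m n : M, EmapK K q m n ∈ E)
    (hbr : ∀ x ∈ E, ∀ y ∈ E, x * y - y * x ∈ E)
    (z u v : A × M × M × E) :
    brEinf K q E hEe hbr z (u - v) = brEinf K q E hEe hbr z u - brEinf K q E hEe hbr z v := by
  refine quad_ext ?_ ?_ ?_ (LinearMap.ext fun p => ?_)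
  all_goals simp only [brEinf, Prod.fst_sub, Prod.snd_sub, Prod.fst_add, Prod.snd_add,
    Prod.smul_fst, Prod.smul_snd, SetLike.val_smul, AddSubgroupClass.coe_sub,
    Submodule.coe_add, map_sub, map_add, LinearMap.map_smul_of_tower,
    LinearMap.sub_apply, LinearMap.add_apply, LinearMap.smul_apply, Module.End.mul_apply,
    LinearMap.smulRight_apply, LinearMap.coe_restrictScalars, EmapK,
    LinearMap.map_sub, LinearMap.map_add, LinearMap.map_smul, map_smul,
    smul_sub, smul_add, sub_smul, add_smul, smul_assoc]
  all_goals module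

private lemma br_add_right (q : M →ₗ[A] M →ₗ[A] A)
    (E : Submodule K (Module.End K M))
    (hEe : ∀ m n : M, EmapK K q m n ∈ E)
    (hbr : ∀ x ∈ E, ∀ y ∈ E, x * y - y * x ∈ E)
    (z u v : A × M × M × E) :
    brEinf K q E hEe hbr z (u + v) = brEinf K q E hEe hbr z u + brEinf K q E hEe hbr z v := by
  refine quad_ext ?_ ?_ ?_ (LinearMap.ext fun p => ?_)
  all_goals simp only [brEinf, Prod.fst_sub, Prod.snd_sub, Prod.fst_add, Prod.snd_add,
    Prod.smul_fst, Prod.smul_snd, SetLike.val_smul, AddSubgroupClass.coe_sub,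
    Submodule.coe_add, map_sub, map_add, LinearMap.map_smul_of_tower,
    LinearMap.sub_apply, LinearMap.add_apply, LinearMap.smul_apply, Module.End.mul_apply,
    LinearMap.smulRight_apply, LinearMap.coe_restrictScalars, EmapK,
    LinearMap.map_sub, LinearMap.map_add, LinearMap.map_smul, map_smul,
    smul_sub, smul_add, sub_smul, add_smul, smul_assoc]
  all_goals module

private lemma br_smul_right (q : M →ₗ[A] M →ₗ[A] A)
    (E : Submodule K (Module.End K M))
    (hEe : ∀ m n : M, EmapK K q m n ∈ E)
    (hbr : ∀ x ∈ E, ∀ y ∈ E, x * y - y * x ∈ E)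
    (k : K) (z u : A × M × M × E) :
    brEinf K q E hEe hbr z (k • u) = k • brEinf K q E hEe hbr z u := by
  refine quad_ext ?_ ?_ ?_ (LinearMap.ext fun p => ?_)
  all_goals simp only [brEinf, Prod.fst_sub, Prod.snd_sub, Prod.fst_add, Prod.snd_add,
    Prod.smul_fst, Prod.smul_snd, SetLike.val_smul, AddSubgroupClass.coe_sub,
    Submodule.coe_add, map_sub, map_add, LinearMap.map_smul_of_tower,
    LinearMap.sub_apply, LinearMap.add_apply, LinearMap.smul_apply, Module.End.mul_apply,
    LinearMap.smulRight_apply, LinearMap.coe_restrictScalars, EmapK,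
    LinearMap.map_sub, LinearMap.map_add, LinearMap.map_smul, map_smul,
    smul_sub, smul_add, sub_smul, add_smul, smul_assoc]
  all_goals module


/-- every `K`-derivation `d` of `L = E_∞` can be written as
`d = ad(z) + d'` with `z ∈ L` and `d'` a `K`-derivation of `L` such that
`d'((1,0,0,0))` lies in the centre `Z(L)`. -/
theorem stmt7 (q : M →ₗ[A] M →ₗ[A] A) (hq : ∀ m n : M, q m n = q n m)
    (E : Submodule K (Module.End K M))
    (hEe : ∀ m n : M, EmapK K q m n ∈ E)
    (hEo : (E : Set (Module.End K M)) ⊆ ospK K q)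
    (hbr : ∀ x ∈ E, ∀ y ∈ E, x * y - y * x ∈ E) :
    ∀ d : (A × M × M × E) → (A × M × M × E), IsLinearMap K d →
      (∀ u v, d (brEinf K q E hEe hbr u v)
          = brEinf K q E hEe hbr (d u) v + brEinf K q E hEe hbr u (d v)) →
      ∃ (z : A × M × M × E) (d' : (A × M × M × E) → (A × M × M × E)),
        IsLinearMap K d' ∧
        (∀ u v, d' (brEinf K q E hEe hbr u v)
            = brEinf K q E hEe hbr (d' u) v + brEinf K q E hEe hbr u (d' v)) ∧
        (∀ u, d u = brEinf K q E hEe hbr z u + d' u) ∧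
        (∀ w, brEinf K q E hEe hbr (d' ((1 : A), (0 : M), (0 : M), (0 : E))) w = 0) := by
  intro d hd hder
  rcases hde : d ((1:A), (0:M), (0:M), (0:E)) with ⟨a₀, m₀, n₀, x₀⟩
  have hbrz0 : ∀ z : A × M × M × E, brEinf K q E hEe hbr z 0 = 0 := by
    intro z
    refine quad_ext ?_ ?_ ?_ (LinearMap.ext fun p => ?_) <;>
      simp only [brEinf, EmapK, map_zero, LinearMap.zero_apply, ZeroMemClass.coe_zero,
      smul_zero, zero_smul, one_smul, map_neg, LinearMap.neg_apply, neg_neg, neg_zero,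
      sub_zero, zero_sub, add_zero, zero_add, sub_self, LinearMap.smulRight_apply,
      LinearMap.coe_restrictScalars, LinearMap.sub_apply, LinearMap.add_apply,
      Module.End.mul_apply, zero_mul, mul_zero, LinearMap.map_neg, smul_neg,
      Prod.fst_zero, Prod.snd_zero]
  -- bracket with e on the left and on the right
  have hbe : ∀ w : A × M × M × E, brEinf K q E hEe hbr ((1:A), (0:M), (0:M), (0:E)) w = ((0:A), w.2.1, -w.2.2.1, (0:E)) := by
    intro w
    refine quad_ext ?_ ?_ ?_ (LinearMap.ext fun p => ?_) <;>
      simp only [brEinf, EmapK, map_zero, LinearMap.zero_apply, ZeroMemClass.coe_zero,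
      smul_zero, zero_smul, one_smul, map_neg, LinearMap.neg_apply, neg_neg, neg_zero,
      sub_zero, zero_sub, add_zero, zero_add, sub_self, LinearMap.smulRight_apply,
      LinearMap.coe_restrictScalars, LinearMap.sub_apply, LinearMap.add_apply,
      Module.End.mul_apply, zero_mul, mul_zero, LinearMap.map_neg, smul_neg,
      Prod.fst_zero, Prod.snd_zero]
  have hbe' : ∀ w : A × M × M × E, brEinf K q E hEe hbr w ((1:A), (0:M), (0:M), (0:E)) = ((0:A), -w.2.1, w.2.2.1, (0:E)) := by
    intro w
    refine quad_ext ?_ ?_ ?_ (LinearMap.ext fun p => ?_) <;>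
      simp only [brEinf, EmapK, map_zero, LinearMap.zero_apply, ZeroMemClass.coe_zero,
      smul_zero, zero_smul, one_smul, map_neg, LinearMap.neg_apply, neg_neg, neg_zero,
      sub_zero, zero_sub, add_zero, zero_add, sub_self, LinearMap.smulRight_apply,
      LinearMap.coe_restrictScalars, LinearMap.sub_apply, LinearMap.add_apply,
      Module.End.mul_apply, zero_mul, mul_zero, LinearMap.map_neg, smul_neg,
      Prod.fst_zero, Prod.snd_zero]
  have hce : d ((1:A), (0:M), (0:M), (0:E)) - brEinf K q E hEe hbr ((0:A), -m₀, n₀, (0:E)) ((1:A), (0:M), (0:M), (0:E)) = (a₀, (0:M), (0:M), x₀) := by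
    rw [hde, hbe' ((0:A), -m₀, n₀, (0:E))]
    simp [Prod.ext_iff]
  have hlin : IsLinearMap K (fun u => d u - brEinf K q E hEe hbr ((0:A), -m₀, n₀, (0:E)) u) := by
    constructor
    · intro u v
      show d (u + v) - brEinf K q E hEe hbr ((0:A), -m₀, n₀, (0:E)) (u + v)
          = (d u - brEinf K q E hEe hbr ((0:A), -m₀, n₀, (0:E)) u)
            + (d v - brEinf K q E hEe hbr ((0:A), -m₀, n₀, (0:E)) v)
      rw [hd.map_add, br_add_right]
      abel
    · intro k u
      show d (k • u) - brEinf K q E hEe hbr ((0:A), -m₀, n₀, (0:E)) (k • u)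
          = k • (d u - brEinf K q E hEe hbr ((0:A), -m₀, n₀, (0:E)) u)
      rw [hd.map_smul, br_smul_right, smul_sub]
  have hder' : ∀ u v, (d (brEinf K q E hEe hbr u v) - brEinf K q E hEe hbr ((0:A), -m₀, n₀, (0:E)) (brEinf K q E hEe hbr u v))
      = brEinf K q E hEe hbr (d u - brEinf K q E hEe hbr ((0:A), -m₀, n₀, (0:E)) u) v
        + brEinf K q E hEe hbr u (d v - brEinf K q E hEe hbr ((0:A), -m₀, n₀, (0:E)) v) := by
    intro u v
    rw [hder, jacZ q hq E hEe hEo hbr (-m₀) n₀ u v, br_sub_left, br_sub_right]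
    abel
  -- fact 2 :  a₀ • m' + x₀ m' = 0
  have f2 : ∀ m' : M, a₀ • m' + (x₀ : Module.End K M) m' = 0 := by
    intro m'
    have h0 : brEinf K q E hEe hbr ((1:A), (0:M), (0:M), (0:E)) ((0:A), m', (0:M), (0:E)) = ((0:A), m', (0:M), (0:E)) := by
      rw [hbe]; simp
    have hY : brEinf K q E hEe hbr (a₀, (0:M), (0:M), x₀) ((0:A), m', (0:M), (0:E))
        = ((0:A), a₀ • m' + (x₀ : Module.End K M) m', (0:M), (0:E)) := by
      refine quad_ext ?_ ?_ ?_ (LinearMap.ext fun p => ?_) <;>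
        simp only [brEinf, EmapK, map_zero, LinearMap.zero_apply, ZeroMemClass.coe_zero,
      smul_zero, zero_smul, one_smul, map_neg, LinearMap.neg_apply, neg_neg, neg_zero,
      sub_zero, zero_sub, add_zero, zero_add, sub_self, LinearMap.smulRight_apply,
      LinearMap.coe_restrictScalars, LinearMap.sub_apply, LinearMap.add_apply,
      Module.End.mul_apply, zero_mul, mul_zero, LinearMap.map_neg, smul_neg,
      Prod.fst_zero, Prod.snd_zero]
    have h := hder' ((1:A), (0:M), (0:M), (0:E)) ((0:A), m', (0:M), (0:E))
    rw [h0, hce, hY,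
      hbe (d ((0:A), m', (0:M), (0:E)) - brEinf K q E hEe hbr ((0:A), -m₀, n₀, (0:E)) ((0:A), m', (0:M), (0:E)))] at h
    have h2 := congrArg (fun w => w.2.1) h
    simp only [Prod.fst_add, Prod.snd_add] at h2
    exact right_eq_add.mp h2
  -- fact 3 :  a₀ • n' - x₀ n' = 0
  have f3 : ∀ n' : M, a₀ • n' - (x₀ : Module.End K M) n' = 0 := by
    intro n'
    have h0 : brEinf K q E hEe hbr ((0:A), (0:M), n', (0:E)) ((1:A), (0:M), (0:M), (0:E)) = ((0:A), (0:M), n', (0:E)) := by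
      rw [hbe']; simp
    have hY : brEinf K q E hEe hbr ((0:A), (0:M), n', (0:E)) (a₀, (0:M), (0:M), x₀)
        = ((0:A), (0:M), a₀ • n' - (x₀ : Module.End K M) n', (0:E)) := by
      refine quad_ext ?_ ?_ ?_ (LinearMap.ext fun p => ?_) <;>
        simp only [brEinf, EmapK, map_zero, LinearMap.zero_apply, ZeroMemClass.coe_zero,
      smul_zero, zero_smul, one_smul, map_neg, LinearMap.neg_apply, neg_neg, neg_zero,
      sub_zero, zero_sub, add_zero, zero_add, sub_self, LinearMap.smulRight_apply,
      LinearMap.coe_restrictScalars, LinearMap.sub_apply, LinearMap.add_apply,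
      Module.End.mul_apply, zero_mul, mul_zero, LinearMap.map_neg, smul_neg,
      Prod.fst_zero, Prod.snd_zero]
    have h := hder' ((0:A), (0:M), n', (0:E)) ((1:A), (0:M), (0:M), (0:E))
    rw [h0, hce, hY,
      hbe' (d ((0:A), (0:M), n', (0:E)) - brEinf K q E hEe hbr ((0:A), -m₀, n₀, (0:E)) ((0:A), (0:M), n', (0:E)))] at h
    have h2 := congrArg (fun w => w.2.2.1) h
    simp only [Prod.fst_add, Prod.snd_add] at h2
    exact left_eq_add.mp h2
  -- fact 1 : x₀ commutes with every element of E, pointwise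
  have f1 : ∀ x' : E, ∀ p : M,
      (x₀ : Module.End K M) ((x' : Module.End K M) p)
        = (x' : Module.End K M) ((x₀ : Module.End K M) p) := by
    intro x' p
    have h0 : brEinf K q E hEe hbr ((0:A), (0:M), (0:M), x') ((1:A), (0:M), (0:M), (0:E)) = 0 := by
      rw [hbe']; simp [Prod.ext_iff]
    have h := hder' ((0:A), (0:M), (0:M), x') ((1:A), (0:M), (0:M), (0:E))
    rw [h0, hd.map_zero, hbrz0, sub_zero, hce,
      hbe' (d ((0:A), (0:M), (0:M), x') - brEinf K q E hEe hbr ((0:A), -m₀, n₀, (0:E)) ((0:A), (0:M), (0:M), x'))] at h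
    have h2 := congrArg (fun w => (w.2.2.2 : Module.End K M) p) h
    simp only [Prod.fst_add, Prod.snd_add, Submodule.coe_add, LinearMap.add_apply,
      brEinf, EmapK, map_zero, LinearMap.zero_apply, ZeroMemClass.coe_zero,
      smul_zero, zero_smul, sub_zero, zero_sub, add_zero, zero_add, sub_self,
      LinearMap.smulRight_apply, LinearMap.coe_restrictScalars, LinearMap.sub_apply,
      Module.End.mul_apply, zero_mul, mul_zero, neg_zero, Prod.fst_zero, Prod.snd_zero] at h2
    have h3 := sub_eq_zero.mp h2.symm
    exact h3.symm
  refine ⟨((0:A), -m₀, n₀, (0:E)), fun u => d u - brEinf K q E hEe hbr ((0:A), -m₀, n₀, (0:E)) u, hlin, hder', ?_, ?_⟩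
  · intro u
    show d u = brEinf K q E hEe hbr ((0:A), -m₀, n₀, (0:E)) u + (d u - brEinf K q E hEe hbr ((0:A), -m₀, n₀, (0:E)) u)
    abel
  · intro w
    show brEinf K q E hEe hbr (d ((1:A), (0:M), (0:M), (0:E)) - brEinf K q E hEe hbr ((0:A), -m₀, n₀, (0:E)) ((1:A), (0:M), (0:M), (0:E))) w = 0
    rw [hce]
    refine quad_ext ?_ ?_ ?_ (LinearMap.ext fun p => ?_)
    · simp [brEinf]
    · simp only [brEinf, smul_zero, map_zero, sub_zero, ZeroMemClass.coe_zero,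
        LinearMap.zero_apply, Prod.fst_zero, Prod.snd_zero]
      exact f2 w.2.1
    · simp only [brEinf, smul_zero, map_zero, sub_zero, add_zero, ZeroMemClass.coe_zero,
        LinearMap.zero_apply, Prod.fst_zero, Prod.snd_zero]
      have h := f3 w.2.2.1
      rw [sub_eq_zero] at h
      rw [← h]
      abel
    · simp only [brEinf, EmapK, Submodule.coe_add, LinearMap.add_apply, LinearMap.sub_apply,
        Module.End.mul_apply, LinearMap.smulRight_apply, LinearMap.coe_restrictScalars,
        ZeroMemClass.coe_zero, LinearMap.zero_apply, map_zero, zero_smul, smul_zero,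
        sub_zero, add_zero, zero_add, zero_sub, neg_zero, Prod.fst_zero, Prod.snd_zero]
      rw [f1 w.2.2.2 p, sub_self]
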